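/- Let ω, σ be weight functions with γ(σ,ω) > 1 and let f : [0,∞) → [0,∞) satisfy σ(t) = o(f(t)) as t → ∞. Suppose there exist C > 0, K > H > 1, t_0 ≥ 0 such that ω(K^j t) ≤ C H^j σ(t) for all t ≥ t_0 and all j ∈ ℕ_{>0}. Then there exist weight functions ω̃, σ̃ such that: ω(t) = o(ω̃(t)), σ(t) = o(σ̃(t)), σ̃(t) = o(f(t)) as t → ∞, and there exist C₁ > 0, K > H₁ > 1 with ω̃(K^j t) ≤ C₁ H₁^j σ̃(t) for all large t and all j ≥ 1. -/

import Mathlib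

open MeasureTheory Set Filter Asymptotics

/-- A weight function: continuous, nondecreasing, nonnegative on `[0,∞)`, vanishing at `0`,
tending to `∞`. -/
def IsWeightFunction (ω : ℝ → ℝ) : Prop :=
  ContinuousOn ω (Set.Ici 0) ∧ MonotoneOn ω (Set.Ici 0) ∧ (∀ t, 0 ≤ t → 0 ≤ ω t) ∧
    ω 0 = 0 ∧ Filter.Tendsto ω Filter.atTop Filter.atTop

/-- Condition `(σ,ω)_{γ_r}`. -/
def GammaCond (σ ω : ℝ → ℝ) (r : ℝ) : Prop :=
  ∃ C : ℝ, 0 < C ∧ ∀ t : ℝ, 0 ≤ t →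
    IntegrableOn (fun y : ℝ => ω (t * y) / y ^ (1 + 1 / r)) (Set.Ioi 1) ∧
    (∫ y in Set.Ioi (1 : ℝ), ω (t * y) / y ^ (1 + 1 / r)) ≤ C * σ t + C

/-- The mixed growth index `γ(σ,ω)`. -/
noncomputable def gammaIndex (σ ω : ℝ → ℝ) : ENNReal :=
  sSup (ENNReal.ofReal '' {r : ℝ | 0 < r ∧ GammaCond σ ω r})

/- ### Auxiliary construction: a slowly increasing continuous "counting" function. -/

/-- Sum of clamped ramps at the points `x n`. -/
noncomputable def gfun (x : ℕ → ℝ) (t : ℝ) : ℝ := ∑' n, min 1 (max 0 (t - x n))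

lemma gfun_nonneg (x : ℕ → ℝ) (t : ℝ) : 0 ≤ gfun x t :=
  tsum_nonneg fun n => le_min one_pos.le (le_max_left _ _)

lemma gterm_nonneg (x : ℕ → ℝ) (t : ℝ) (n : ℕ) : 0 ≤ min 1 (max 0 (t - x n)) :=
  le_min one_pos.le (le_max_left _ _)

lemma gterm_le_one (x : ℕ → ℝ) (t : ℝ) (n : ℕ) : min 1 (max 0 (t - x n)) ≤ 1 :=
  min_le_left _ _

section GAux

variable {x : ℕ → ℝ} (hstep : ∀ n, x n + 1 ≤ x (n + 1)) (hx0 : x 0 = 0)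

include hstep

lemma x_add_le : ∀ n k : ℕ, x n + k ≤ x (n + k) := by
  intro n k
  induction k with
  | zero => simp
  | succ k ih =>
    have h2 := hstep (n + k)
    push_cast
    have : x n + (k + 1 : ℝ) = (x n + k) + 1 := by ring
    rw [this, show n + (k+1) = (n+k) + 1 by ring]
    push_cast at ih
    linarith

lemma x_mono_le {n m : ℕ} (h : n ≤ m) : x n ≤ x m := by
  obtain ⟨k, rfl⟩ := Nat.exists_eq_add_of_le h
  have := x_add_le hstep n k
  have : (0:ℝ) ≤ k := Nat.cast_nonneg k
  linarith [x_add_le hstep n k]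

lemma x_mono_lt {n m : ℕ} (h : n < m) : x n + 1 ≤ x m := by
  calc x n + 1 ≤ x (n+1) := hstep n
  _ ≤ x m := x_mono_le hstep h

include hx0

lemma x_ge (n : ℕ) : (n : ℝ) ≤ x n := by
  have := x_add_le hstep 0 n
  simpa [hx0] using this

lemma x_nonneg (n : ℕ) : 0 ≤ x n :=
  le_trans (Nat.cast_nonneg n) (x_ge hstep hx0 n)

lemma gfun_summable (t : ℝ) : Summable (fun n => min 1 (max 0 (t - x n))) := by
  apply summable_of_ne_finset_zero (s := Finset.range ⌈t⌉₊)
  intro n hn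
  rw [Finset.mem_range, not_lt] at hn
  have h1 : t ≤ (n : ℝ) := le_trans (Nat.le_ceil t) (by exact_mod_cast hn)
  have h2 : t ≤ x n := le_trans h1 (x_ge hstep hx0 n)
  simp [max_eq_left (by linarith : t - x n ≤ 0)]

omit hx0 in
lemma gfun_eq_sum {t : ℝ} {N : ℕ} (hN : t ≤ x N) :
    gfun x t = ∑ n ∈ Finset.range N, min 1 (max 0 (t - x n)) := by
  apply tsum_eq_sum
  intro n hn
  rw [Finset.mem_range, not_lt] at hn
  have h2 : t ≤ x n := le_trans hN (x_mono_le hstep hn)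
  simp [max_eq_left (by linarith : t - x n ≤ 0)]

lemma gfun_mono : Monotone (gfun x) := by
  intro s t hst
  apply Summable.tsum_le_tsum _ (gfun_summable hstep hx0 s) (gfun_summable hstep hx0 t)
  intro n
  exact min_le_min le_rfl (max_le_max le_rfl (by linarith))

lemma gfun_le {t : ℝ} {m : ℕ} (h : t ≤ x m) : gfun x t ≤ m := by
  rw [gfun_eq_sum hstep h]
  calc ∑ n ∈ Finset.range m, min 1 (max 0 (t - x n)) ≤ ∑ _n ∈ Finset.range m, (1:ℝ) :=
        Finset.sum_le_sum fun n _ => gterm_le_one x t n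
  _ = m := by simp

lemma le_gfun {t : ℝ} {m : ℕ} (h : x m ≤ t) : (m : ℝ) ≤ gfun x t := by
  have : (m : ℝ) = ∑ n ∈ Finset.range m, (1:ℝ) := by simp
  rw [this]
  have hsum : ∑ n ∈ Finset.range m, (1:ℝ) = ∑ n ∈ Finset.range m, min 1 (max 0 (t - x n)) := by
    apply Finset.sum_congr rfl
    intro n hn
    rw [Finset.mem_range] at hn
    have h1 : x n + 1 ≤ x m := x_mono_lt hstep hn
    have h2 : (1:ℝ) ≤ t - x n := by linarith
    rw [max_eq_right (by linarith), min_eq_left h2]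
  rw [hsum]
  exact Summable.sum_le_tsum _ (fun n _ => gterm_nonneg x t n) (gfun_summable hstep hx0 t)

lemma gfun_continuous : Continuous (gfun x) := by
  rw [continuous_iff_continuousAt]
  intro t
  set N := ⌈t⌉₊ + 1 with hNdef
  have hN : t < x N := by
    have h1 : t < (N : ℝ) := by
      have := Nat.le_ceil t
      push_cast [hNdef]
      linarith
    exact lt_of_lt_of_le h1 (x_ge hstep hx0 N)
  have hcont : ContinuousAt (fun u => ∑ n ∈ Finset.range N, min 1 (max 0 (u - x n))) t := by
    apply Continuous.continuousAt
    apply continuous_finset_sum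
    intro n _
    exact continuous_const.min ((continuous_const.max (continuous_id.sub continuous_const)))
  apply hcont.congr
  filter_upwards [Iio_mem_nhds hN] with u hu
  exact (gfun_eq_sum hstep (le_of_lt hu)).symm

lemma gfun_tendsto : Tendsto (gfun x) atTop atTop := by
  rw [tendsto_atTop]
  intro b
  filter_upwards [eventually_ge_atTop (x ⌈b⌉₊)] with t ht
  calc b ≤ (⌈b⌉₊ : ℝ) := Nat.le_ceil b
  _ ≤ gfun x t := le_gfun hstep hx0 ht

lemma gfun_bracket {t : ℝ} {n : ℕ} (h : x n ≤ t) :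
    ∃ m : ℕ, n ≤ m ∧ x m ≤ t ∧ t < x (m + 1) := by
  classical
  have hnN : n ≤ ⌈t⌉₊ := by
    have h1 : (n : ℝ) ≤ t := le_trans (x_ge hstep hx0 n) h
    exact_mod_cast le_trans h1 (Nat.le_ceil t)
  have hPm : x (Nat.findGreatest (fun m => x m ≤ t) ⌈t⌉₊) ≤ t :=
    Nat.findGreatest_spec (P := fun m => x m ≤ t) hnN h
  set m := Nat.findGreatest (fun m => x m ≤ t) ⌈t⌉₊ with hmdef
  refine ⟨m, Nat.le_findGreatest hnN h, hPm, ?_⟩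
  by_cases hc : m + 1 ≤ ⌈t⌉₊
  · have hng := Nat.findGreatest_is_greatest (P := fun m => x m ≤ t)
      (n := ⌈t⌉₊) (k := m + 1) (by omega) hc
    simp only [not_le] at hng
    exact hng
  · push_neg at hc
    have hNm : ⌈t⌉₊ ≤ m := Nat.lt_succ_iff.mp hc
    have h1 : t ≤ (⌈t⌉₊ : ℝ) := Nat.le_ceil t
    have h2 : ((⌈t⌉₊ : ℕ) : ℝ) ≤ (m : ℝ) := Nat.cast_le.mpr hNm
    have h3 : ((m+1 : ℕ) : ℝ) ≤ x (m+1) := x_ge hstep hx0 (m+1)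
    push_cast at h3
    linarith

end GAux

theorem stmt15 (ω σ f : ℝ → ℝ)
    (hω : IsWeightFunction ω) (hσ : IsWeightFunction σ)
    (hf : ∀ t, 0 ≤ t → 0 ≤ f t)
    (hγ : 1 < gammaIndex σ ω)
    (hσf : σ =o[atTop] f)
    (C K H t₀ : ℝ) (hC : 0 < C) (hH : 1 < H) (hKH : H < K) (ht₀ : 0 ≤ t₀)
    (hram : ∀ t : ℝ, t₀ ≤ t → ∀ j : ℕ, 1 ≤ j → ω (K ^ j * t) ≤ C * H ^ j * σ t) :
    ∃ ωt σt : ℝ → ℝ, IsWeightFunction ωt ∧ IsWeightFunction σt ∧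
      ω =o[atTop] ωt ∧ σ =o[atTop] σt ∧ σt =o[atTop] f ∧
      ∃ C₁ : ℝ, 0 < C₁ ∧ ∃ H₁ : ℝ, 1 < H₁ ∧ H₁ < K ∧ ∃ t₁ : ℝ,
        ∀ t : ℝ, t₁ ≤ t → ∀ j : ℕ, 1 ≤ j → ωt (K ^ j * t) ≤ C₁ * H₁ ^ j * σt t := by
  classical
  have hH0 : (0:ℝ) < H := lt_trans one_pos hH
  have hK1 : (1:ℝ) < K := lt_trans hH hKH
  have hK0 : (0:ℝ) < K := lt_trans one_pos hK1
  -- λ, the extra stretch factor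
  obtain ⟨lam, hlam1, hlamK⟩ : ∃ lam : ℝ, 1 < lam ∧ lam * H < K := by
    refine ⟨(1 + K / H) / 2, ?_, ?_⟩
    · have hKH1 : 1 < K / H := (one_lt_div hH0).2 hKH
      linarith
    · have hKH1 : 1 < K / H := (one_lt_div hH0).2 hKH
      have h2 : (1 + K / H) / 2 < K / H := by linarith
      have := (lt_div_iff₀ hH0).1 h2
      linarith
  -- p : how many K-steps between consecutive x's
  obtain ⟨p, hp0, hpinv⟩ : ∃ p : ℕ, 0 < p ∧ 1 / (p:ℝ) ≤ lam - 1 := by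
    refine ⟨⌈1 / (lam - 1)⌉₊ + 1, Nat.succ_pos _, ?_⟩
    have hl0 : (0:ℝ) < lam - 1 := by linarith
    have hp0' : (0:ℝ) < (⌈1 / (lam - 1)⌉₊ + 1 : ℕ) := by positivity
    have h1 : 1 / (lam - 1) ≤ ((⌈1 / (lam - 1)⌉₊ + 1 : ℕ) : ℝ) := by
      refine le_trans (Nat.le_ceil _) ?_
      push_cast; linarith
    rw [div_le_iff₀ hp0']
    rw [div_le_iff₀ hl0] at h1
    nlinarith
  have hp0' : (0:ℝ) < p := Nat.cast_pos.2 hp0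
  -- thresholds from σ = o(f)
  have hT : ∀ n : ℕ, ∃ T : ℝ, ∀ t : ℝ, T ≤ t → ‖σ t‖ ≤ (1/((n:ℝ)+1)^2) * ‖f t‖ := by
    intro n
    have h := hσf.def (show (0:ℝ) < 1/((n:ℝ)+1)^2 by positivity)
    rw [eventually_atTop] at h
    obtain ⟨a, ha⟩ := h
    exact ⟨a, fun t ht => ha t ht⟩
  choose T hTspec using hT
  -- the sequence x
  obtain ⟨x, hx0, hxsucc⟩ :
      ∃ x : ℕ → ℝ, x 0 = 0 ∧ ∀ n, x (n+1) = max (K ^ p * x n) (max (T (n+1)) (x n)) + 1 :=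
    ⟨fun n => Nat.rec (0:ℝ) (fun n xn => max (K ^ p * xn) (max (T (n+1)) xn) + 1) n,
      rfl, fun n => rfl⟩
  have hstep : ∀ n, x n + 1 ≤ x (n+1) := by
    intro n
    rw [hxsucc n]
    have : x n ≤ max (T (n+1)) (x n) := le_max_right _ _
    have : x n ≤ max (K ^ p * x n) (max (T (n+1)) (x n)) := le_trans this (le_max_right _ _)
    linarith
  have hxnn : ∀ n, 0 ≤ x n := x_nonneg hstep hx0
  have hxK : ∀ n, K ^ p * x n ≤ x (n+1) := by
    intro n
    rw [hxsucc n]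
    have := le_max_left (K ^ p * x n) (max (T (n+1)) (x n))
    linarith
  have hxT : ∀ n, T (n+1) ≤ x (n+1) := by
    intro n
    rw [hxsucc n]
    have : T (n+1) ≤ max (T (n+1)) (x n) := le_max_left _ _
    have := le_trans this (le_max_right (K ^ p * x n) _)
    linarith
  -- the growth lemma for g
  have hgrow : ∀ t : ℝ, x 1 ≤ t → ∀ j : ℕ, 1 ≤ j →
      gfun x (K ^ j * t) ≤ 3 * lam ^ j * gfun x t := by
    intro t ht j hj
    obtain ⟨m, hm1, hmt, htm⟩ := gfun_bracket hstep hx0 ht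
    obtain ⟨q, hqdef⟩ : ∃ q : ℕ, q = j / p + 1 := ⟨_, rfl⟩
    have hpq : j ≤ p * q := by
      have h1 : p * (j / p) + j % p = j := Nat.div_add_mod j p
      have h2 : j % p < p := Nat.mod_lt j hp0
      calc j = p * (j / p) + j % p := h1.symm
      _ ≤ p * (j / p) + p := Nat.add_le_add_left (le_of_lt h2) _
      _ = p * (j / p + 1) := (Nat.mul_succ p _).symm
      _ = p * q := by rw [hqdef]
    -- iterate the K^p step
    have hiter : ∀ i : ℕ, K ^ (p * i) * x (m+1) ≤ x (m+1+i) := by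
      intro i
      induction i with
      | zero => simp
      | succ i ih =>
        have h1 : K ^ p * (K ^ (p*i) * x (m+1)) ≤ K ^ p * x (m+1+i) :=
          mul_le_mul_of_nonneg_left ih (by positivity)
        have h2 := hxK (m+1+i)
        calc K ^ (p * (i+1)) * x (m+1)
            = K ^ p * (K ^ (p*i) * x (m+1)) := by rw [← mul_assoc, ← pow_add]; ring_nf
        _ ≤ K ^ p * x (m+1+i) := h1
        _ ≤ x (m+1+i+1) := h2
        _ = x (m+1+(i+1)) := by ring_nf
    have hx1pos : 0 < t := by
      have h1 := x_ge hstep hx0 1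
      push_cast at h1
      linarith
    have hKjt : K ^ j * t < x (m + 1 + q) := by
      have h1 : K ^ j * t < K ^ j * x (m+1) := by
        apply mul_lt_mul_of_pos_left htm (by positivity)
      have h2 : K ^ j * x (m+1) ≤ K ^ (p*q) * x (m+1) := by
        apply mul_le_mul_of_nonneg_right _ (hxnn (m+1))
        exact pow_le_pow_right₀ (le_of_lt hK1) hpq
      exact lt_of_lt_of_le (lt_of_lt_of_le h1 h2) (hiter q)
    have hup : gfun x (K ^ j * t) ≤ ((m + 1 + q : ℕ) : ℝ) :=
      gfun_le hstep hx0 (le_of_lt hKjt)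
    have hlo : (m : ℝ) ≤ gfun x t := le_gfun hstep hx0 hmt
    -- arithmetic
    have hq' : (q : ℝ) ≤ (j : ℝ) / p + 1 := by
      rw [hqdef]; push_cast
      have := Nat.cast_div_le (α := ℝ) (m := j) (n := p)
      linarith
    have hjp : (j : ℝ) / p ≤ (j : ℝ) * (lam - 1) := by
      rw [div_eq_mul_inv]
      apply mul_le_mul_of_nonneg_left _ (Nat.cast_nonneg j)
      rw [← one_div]
      exact hpinv
    have hbern : 1 + (j:ℝ) * (lam - 1) ≤ lam ^ j := by
      have := one_add_mul_le_pow (show (-2:ℝ) ≤ lam - 1 by linarith) j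
      have heq : (1 + (lam - 1)) = lam := by ring
      rwa [heq] at this
    have hm1' : (1:ℝ) ≤ (m:ℝ) := by exact_mod_cast hm1
    have hjl : (0:ℝ) ≤ (j:ℝ) * (lam - 1) := by
      apply mul_nonneg (Nat.cast_nonneg j); linarith
    have key : ((m + 1 + q : ℕ) : ℝ) ≤ 3 * lam ^ j * (m : ℝ) := by
      push_cast
      nlinarith [mul_le_mul_of_nonneg_left hbern (show (0:ℝ) ≤ 3 * (m:ℝ) by linarith),
        mul_nonneg (show (0:ℝ) ≤ 3 * (m:ℝ) - 1 by linarith) hjl]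
    calc gfun x (K ^ j * t) ≤ ((m + 1 + q : ℕ) : ℝ) := hup
    _ ≤ 3 * lam ^ j * (m : ℝ) := key
    _ ≤ 3 * lam ^ j * gfun x t := by
        apply mul_le_mul_of_nonneg_left hlo
        positivity
  -- the tilde weights
  refine ⟨fun t => gfun x t * ω t, fun t => gfun x t * σ t, ?_, ?_, ?_, ?_, ?_, ?_⟩
  pick_goal 6
  · -- the ramified condition
    refine ⟨3 * C, by linarith, lam * H, by nlinarith, hlamK, max t₀ (x 1), ?_⟩
    intro t ht j hj
    have htt0 : t₀ ≤ t := le_trans (le_max_left _ _) ht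
    have htx1 : x 1 ≤ t := le_trans (le_max_right _ _) ht
    have ht0 : 0 ≤ t := le_trans (hxnn 1) htx1
    have hA := hram t htt0 j hj
    have hB := hgrow t htx1 j hj
    have hωnn : 0 ≤ ω (K ^ j * t) := hω.2.2.1 _ (by positivity)
    have hσnn : 0 ≤ σ t := hσ.2.2.1 t ht0
    have hCHσ : 0 ≤ C * H ^ j * σ t := by positivity
    have hgnn : 0 ≤ gfun x (K ^ j * t) := gfun_nonneg x _
    calc gfun x (K ^ j * t) * ω (K ^ j * t)
        ≤ gfun x (K ^ j * t) * (C * H ^ j * σ t) := mul_le_mul_of_nonneg_left hA hgnn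
    _ ≤ (3 * lam ^ j * gfun x t) * (C * H ^ j * σ t) := mul_le_mul_of_nonneg_right hB hCHσ
    _ = 3 * C * (lam * H) ^ j * (gfun x t * σ t) := by rw [mul_pow]; ring
  · -- ωt weight function
    refine ⟨((gfun_continuous hstep hx0).continuousOn).mul hω.1, ?_, ?_, ?_, ?_⟩
    · intro a ha b hb hab
      exact mul_le_mul ((gfun_mono hstep hx0).monotoneOn _ ha hb hab) (hω.2.1 ha hb hab)
        (hω.2.2.1 a ha) (gfun_nonneg x b)
    · intro t ht; exact mul_nonneg (gfun_nonneg x t) (hω.2.2.1 t ht)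
    · show gfun x 0 * ω 0 = 0
      rw [hω.2.2.2.1, mul_zero]
    · exact (gfun_tendsto hstep hx0).atTop_mul_atTop₀ hω.2.2.2.2
  · -- σt weight function
    refine ⟨((gfun_continuous hstep hx0).continuousOn).mul hσ.1, ?_, ?_, ?_, ?_⟩
    · intro a ha b hb hab
      exact mul_le_mul ((gfun_mono hstep hx0).monotoneOn _ ha hb hab) (hσ.2.1 ha hb hab)
        (hσ.2.2.1 a ha) (gfun_nonneg x b)
    · intro t ht; exact mul_nonneg (gfun_nonneg x t) (hσ.2.2.1 t ht)
    · show gfun x 0 * σ 0 = 0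
      rw [hσ.2.2.2.1, mul_zero]
    · exact (gfun_tendsto hstep hx0).atTop_mul_atTop₀ hσ.2.2.2.2
  · -- ω = o(ωt)
    rw [isLittleO_iff]
    intro c hc
    filter_upwards [eventually_ge_atTop (x ⌈1/c⌉₊), eventually_ge_atTop (0:ℝ)] with t ht ht0
    have hg : (⌈1/c⌉₊ : ℝ) ≤ gfun x t := le_gfun hstep hx0 ht
    have hg1 : 1/c ≤ gfun x t := le_trans (Nat.le_ceil _) hg
    have hωnn : 0 ≤ ω t := hω.2.2.1 t ht0
    have hgnn : 0 ≤ gfun x t := gfun_nonneg x t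
    rw [Real.norm_eq_abs, Real.norm_eq_abs, abs_of_nonneg hωnn,
      abs_of_nonneg (mul_nonneg hgnn hωnn)]
    have h1 : 1 ≤ c * gfun x t := by
      rw [div_le_iff₀ hc] at hg1; linarith [hg1]
    nlinarith
  · -- σ = o(σt)
    rw [isLittleO_iff]
    intro c hc
    filter_upwards [eventually_ge_atTop (x ⌈1/c⌉₊), eventually_ge_atTop (0:ℝ)] with t ht ht0
    have hg : (⌈1/c⌉₊ : ℝ) ≤ gfun x t := le_gfun hstep hx0 ht
    have hg1 : 1/c ≤ gfun x t := le_trans (Nat.le_ceil _) hg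
    have hσnn : 0 ≤ σ t := hσ.2.2.1 t ht0
    have hgnn : 0 ≤ gfun x t := gfun_nonneg x t
    rw [Real.norm_eq_abs, Real.norm_eq_abs, abs_of_nonneg hσnn,
      abs_of_nonneg (mul_nonneg hgnn hσnn)]
    have h1 : 1 ≤ c * gfun x t := by
      rw [div_le_iff₀ hc] at hg1; linarith [hg1]
    nlinarith
  · -- σt = o(f)
    rw [isLittleO_iff]
    intro c hc
    set n : ℕ := ⌈1/c⌉₊ + 1 with hndef
    filter_upwards [eventually_ge_atTop (x n)] with t ht
    obtain ⟨m, hmn, hmt, htm⟩ := gfun_bracket hstep hx0 ht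
    have hm1 : 1 ≤ m := le_trans (by omega) hmn
    obtain ⟨k, rfl⟩ : ∃ k, m = k + 1 := ⟨m - 1, by omega⟩
    have hTm : T (k+1) ≤ t := le_trans (hxT k) hmt
    have hσest := hTspec (k+1) t hTm
    have hgle : gfun x t ≤ ((k+1+1 : ℕ) : ℝ) := gfun_le hstep hx0 (le_of_lt htm)
    have hgnn : 0 ≤ gfun x t := gfun_nonneg x t
    push_cast at hσest hgle
    have hk2 : (0:ℝ) < (k:ℝ) + 1 + 1 := by positivity
    have hkc : 1/((k:ℝ)+1+1) ≤ c := by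
      have h1 : (1:ℝ)/c ≤ ((⌈1/c⌉₊ : ℕ) : ℝ) := Nat.le_ceil _
      have h2 : ((⌈1/c⌉₊ : ℕ) : ℝ) ≤ (k:ℝ)+1 := by
        have h2' : ⌈1/c⌉₊ ≤ k + 1 := by omega
        exact_mod_cast h2'
      have h3 : (1:ℝ)/c ≤ (k:ℝ)+1+1 := by linarith
      rw [div_le_iff₀ hc] at h3
      rw [div_le_iff₀ hk2]
      exact le_of_le_of_eq h3 (mul_comm _ _)
    have hnorm : ‖gfun x t * σ t‖ = gfun x t * ‖σ t‖ := by
      rw [Real.norm_eq_abs, Real.norm_eq_abs, abs_mul, abs_of_nonneg hgnn]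
    rw [hnorm]
    calc gfun x t * ‖σ t‖ ≤ ((k:ℝ)+1+1) * (1/((k:ℝ)+1+1)^2 * ‖f t‖) :=
          mul_le_mul hgle hσest (norm_nonneg _) (by positivity)
    _ = (1/((k:ℝ)+1+1)) * ‖f t‖ := by
        field_simp
    _ ≤ c * ‖f t‖ := mul_le_mul_of_nonneg_right hkc (norm_nonneg _)
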